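/- Let ((Φ^{(i)})_{i∈I}, (p_i)_{i∈I}, ℙ) be a model (contraction ratios r_i ∈ (-1,1)\{0}, possibly negative) satisfying the strong separation condition, and assume that for every ω ∈ I^ℕ the pairwise distances between the sets f^{(ω_1)}_u(Y^{(σω)}), 1 ≤ u ≤ k_{ω_1}, are greater than 2. For ω, u and a ∈ ℤ/2ℤ define η_{ω,u,a} ∈ 𝒫([-1,1]) by η_{ω,u,a}(E) = η_{ω,u}(E) if a = 0 and η_{ω,u,a}(E) = η_{ω,u}(-E) if a = 1, where η_{ω,u}(E) = η^{(ω)}(E + Π_ω(u)) / η^{(ω)}([Π_ω(u)-1, Π_ω(u)+1]). Define M'(ω,u,a) = (σω, σu, a) if r_{ω_1} > 0 and M'(ω,u,a) = (σω, σu, a+1) if r_{ω_1} < 0. Then for every ω, u, a: S_{-log|r_{ω_1}|} η_{ω,u,a} = η_{M'(ω,u,a)}. -/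

import Mathlib

open MeasureTheory Filter Topology

noncomputable section

/-- The left shift on sequences. -/
def shiftSeq {I : Type*} (ω : ℕ → I) : ℕ → I := fun n => ω (n + 1)

/-- The coding map `Π_ω(u) = Σ_{n} (Π_{j<n} r_{ω_j}) · t^{(ω_n)}_{u_n}` of a model. -/
def coding {I : Type*} (k : I → ℕ) (r : I → ℝ) (t : (i : I) → Fin (k i) → ℝ)
    (ω : ℕ → I) (u : (n : ℕ) → Fin (k (ω n))) : ℝ :=
  ∑' n : ℕ, (∏ j ∈ Finset.range n, r (ω j)) * t (ω n) (u n)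

/-- The set `Y^{(ω)}`, the image of the coding map. -/
def Yset {I : Type*} (k : I → ℕ) (r : I → ℝ) (t : (i : I) → Fin (k i) → ℝ)
    (ω : ℕ → I) : Set ℝ :=
  Set.range (coding k r t ω)

/-- The recentering of a measure `η` at `x`: `η_x(E) = η(E + x) / η([x-1,x+1])` for Borel
`E ⊆ [-1,1]` (realized as a measure on `ℝ` supported on `[-1,1]`). -/
def recenter (η : Measure ℝ) (x : ℝ) : Measure ℝ :=
  (η (Set.Icc (x - 1) (x + 1)))⁻¹ •
    (Measure.map (fun y => y - x) η).restrict (Set.Icc (-1 : ℝ) 1)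

/-- The scaling flow: `S_τ ν (E) = ν(e^{-τ}·E) / ν([-e^{-τ}, e^{-τ}])` for Borel
`E ⊆ [-1,1]` (realized as a measure on `ℝ` supported on `[-1,1]`). -/
def scaleM (τ : ℝ) (ν : Measure ℝ) : Measure ℝ :=
  (ν (Set.Icc (-(Real.exp (-τ))) (Real.exp (-τ))))⁻¹ •
    (Measure.map (fun y => Real.exp τ * y) ν).restrict (Set.Icc (-1 : ℝ) 1)

/-- The signed recentering `η_{ω,u,a}`: equal to `η_{ω,u}` if `a = 0`, and to its
reflection around the origin (`E ↦ η_{ω,u}(-E)`) if `a = 1`. -/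
def etaSigned {I : Type*} (k : I → ℕ) (r : I → ℝ) (t : (i : I) → Fin (k i) → ℝ)
    (η' : (ω : ℕ → I) → Measure ((n : ℕ) → Fin (k (ω n))))
    (ω : ℕ → I) (u : (n : ℕ) → Fin (k (ω n))) (a : ZMod 2) : Measure ℝ :=
  if a = 0 then
    recenter (Measure.map (coding k r t ω) (η' ω)) (coding k r t ω u)
  else
    Measure.map (fun x : ℝ => -x)
      (recenter (Measure.map (coding k r t ω) (η' ω)) (coding k r t ω u))


namespace Stmt10Aux

open MeasureTheory
open scoped ENNReal

set_option linter.unusedSectionVars false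
set_option linter.unusedVariables false
set_option maxHeartbeats 1000000

lemma tsum_tail_bound {d : ℕ → ℝ} {C c : ℝ} {n : ℕ} (hc0 : 0 ≤ c) (hc1 : c < 1) (hC : 0 ≤ C)
    (hd : Summable d) (h0 : ∀ m < n, d m = 0) (hb : ∀ m, |d m| ≤ C * c ^ m) :
    |∑' m, d m| ≤ C * c ^ n * (1 - c)⁻¹ := by
  have htail : ∑' m, d m = ∑' m, d (m + n) := by
    rw [← hd.sum_add_tsum_nat_add n,
      Finset.sum_eq_zero (fun m hm => h0 m (Finset.mem_range.1 hm)), zero_add]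
  have hb' : ∀ m, |d (m + n)| ≤ C * c ^ n * c ^ m := by
    intro m
    calc |d (m + n)| ≤ C * c ^ (m + n) := hb (m + n)
      _ = C * c ^ n * c ^ m := by rw [pow_add]; ring
  have hsum2 : Summable (fun m : ℕ => C * c ^ n * c ^ m) :=
    (summable_geometric_of_lt_one hc0 hc1).mul_left _
  have h3 : Summable (fun m => |d (m + n)|) :=
    hsum2.of_nonneg_of_le (fun m => abs_nonneg _) hb'
  rw [htail]
  have step1 : |∑' m, d (m + n)| ≤ ∑' m, |d (m + n)| := by
    have := norm_tsum_le_tsum_norm (f := fun m => d (m + n))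
      (by simpa [Real.norm_eq_abs] using h3)
    simpa [Real.norm_eq_abs] using this
  have step2 : ∑' m, |d (m + n)| ≤ ∑' m, C * c ^ n * c ^ m :=
    Summable.tsum_le_tsum hb' h3 hsum2
  have step3 : ∑' m : ℕ, C * c ^ n * c ^ m = C * c ^ n * (1 - c)⁻¹ := by
    rw [tsum_mul_left, tsum_geometric_of_lt_one hc0 hc1]
  linarith

lemma smul_app (c : ℝ≥0∞) (μ : Measure ℝ) (S : Set ℝ) : (c • μ) S = c * μ S := rfl

lemma enn_cancel {a : ℝ≥0∞} (x y : ℝ≥0∞) (ha0 : a ≠ 0) (ha : a ≠ ⊤) :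
    (a * x)⁻¹ * (a * y) = x⁻¹ * y := by
  rw [ENNReal.mul_inv (Or.inl ha0) (Or.inl ha), mul_mul_mul_comm,
    ENNReal.inv_mul_cancel ha0 ha, one_mul]

lemma neg_preimage_Icc' (a : ℝ) : (fun x : ℝ => -x) ⁻¹' Set.Icc (-a) a = Set.Icc (-a) a := by
  ext z
  simp only [Set.mem_preimage, Set.mem_Icc]
  constructor <;> rintro ⟨h1, h2⟩ <;> constructor <;> linarith

lemma scaleM_map_neg (τ : ℝ) (ν : Measure ℝ) :
    scaleM τ (Measure.map (fun x : ℝ => -x) ν)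
      = Measure.map (fun x : ℝ => -x) (scaleM τ ν) := by
  have hmneg : Measurable (fun x : ℝ => -x) := measurable_neg
  have hmmul : Measurable (fun y : ℝ => Real.exp τ * y) := measurable_id.const_mul _
  rw [scaleM, scaleM]
  have h1 : Measure.map (fun x : ℝ => -x) ν (Set.Icc (-(Real.exp (-τ))) (Real.exp (-τ)))
      = ν (Set.Icc (-(Real.exp (-τ))) (Real.exp (-τ))) := by
    rw [Measure.map_apply hmneg measurableSet_Icc, neg_preimage_Icc']
  rw [h1]
  have h2 : Measure.map (fun y : ℝ => Real.exp τ * y) (Measure.map (fun x : ℝ => -x) ν)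
      = Measure.map (fun x : ℝ => -x) (Measure.map (fun y : ℝ => Real.exp τ * y) ν) := by
    rw [Measure.map_map hmmul hmneg, Measure.map_map hmneg hmmul]
    congr 1
    funext y
    simp [Function.comp]
  rw [h2]
  rw [Measure.map_smul]
  congr 1
  conv_rhs => rw [← neg_preimage_Icc' 1]
  rw [← Measure.restrict_map hmneg measurableSet_Icc]

lemma map_neg_neg (μ : Measure ℝ) :
    Measure.map (fun x : ℝ => -x) (Measure.map (fun x : ℝ => -x) μ) = μ := by
  rw [Measure.map_map measurable_neg measurable_neg]
  have : ((fun x : ℝ => -x) ∘ fun x : ℝ => -x) = id := by funext x; simp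
  rw [this, Measure.map_id]

section cyl
variable {I : Type} (k : I → ℕ) (hk : ∀ i, 0 < k i) (ω' : ℕ → I)

def cylSet (n : ℕ) (c : (j : ℕ) → Fin (k (ω' j))) : Set ((j : ℕ) → Fin (k (ω' j))) :=
  {v | ∀ j < n, v j = c j}

def cylFam : Set (Set ((j : ℕ) → Fin (k (ω' j)))) :=
  {A | ∃ n c, A = cylSet k ω' n c}

lemma isPiSystem_cylFam : IsPiSystem (cylFam k ω') := by
  rintro _ ⟨n₁, c₁, rfl⟩ _ ⟨n₂, c₂, rfl⟩ ⟨v, hv₁, hv₂⟩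
  rcases le_total n₁ n₂ with h | h
  · refine ⟨n₂, c₂, ?_⟩
    ext w
    constructor
    · rintro ⟨_, hw₂⟩; exact hw₂
    · intro hw
      refine ⟨fun j hj => ?_, hw⟩
      rw [hw j (lt_of_lt_of_le hj h), ← hv₂ j (lt_of_lt_of_le hj h), hv₁ j hj]
  · refine ⟨n₁, c₁, ?_⟩
    ext w
    constructor
    · rintro ⟨hw₁, _⟩; exact hw₁
    · intro hw
      refine ⟨hw, fun j hj => ?_⟩
      rw [hw j (lt_of_lt_of_le hj h), ← hv₁ j (lt_of_lt_of_le hj h), hv₂ j hj]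

include hk in
lemma generateFrom_cylFam :
    MeasurableSpace.generateFrom (cylFam k ω') = MeasurableSpace.pi := by
  apply le_antisymm
  · rw [MeasurableSpace.generateFrom_le_iff]
    rintro _ ⟨n, c, rfl⟩
    have : cylSet k ω' n c = ⋂ j ∈ Finset.range n, (fun v => v j) ⁻¹' {c j} := by
      ext v; simp [cylSet]
    rw [this]
    exact MeasurableSet.biInter (Finset.range n).countable_toSet
      (fun j _ => (measurable_pi_apply j) (measurableSet_singleton (c j)))
  · have : ∀ m : ℕ, @Measurable _ _ (MeasurableSpace.generateFrom (cylFam k ω')) _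
        (fun v : (j : ℕ) → Fin (k (ω' j)) => v m) := by
      intro m
      intro s _
      have hssub : (fun v : (j : ℕ) → Fin (k (ω' j)) => v m) ⁻¹' s
          = ⋃ c ∈ {c : Fin (k (ω' m)) | c ∈ s}, (fun v => v m) ⁻¹' {c} := by
        ext v; simp
      rw [hssub]
      apply MeasurableSet.biUnion (Set.to_countable _)
      intro c _
      haveI : ∀ n, Nonempty (Fin (k (ω' n))) := fun n => ⟨⟨0, hk _⟩⟩
      have : (fun v : (j : ℕ) → Fin (k (ω' j)) => v m) ⁻¹' {c}
          = ⋃ w ∈ {w : (j : Fin (m+1)) → Fin (k (ω' j)) | w ⟨m, Nat.lt_succ_self m⟩ = c},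
              cylSet k ω' (m+1)
                (fun j => if h : j < m+1 then w ⟨j, h⟩ else Classical.arbitrary _) := by
        ext v
        simp only [Set.mem_preimage, Set.mem_singleton_iff, Set.mem_iUnion, Set.mem_setOf_eq]
        constructor
        · intro hv
          refine ⟨fun j => v j, hv, fun j hj => ?_⟩
          simp [cylSet, hj]
        · rintro ⟨w, hwc, hw⟩
          have := hw m (Nat.lt_succ_self m)
          simpa [hwc] using this
      rw [this]
      apply MeasurableSet.biUnion (Set.to_countable _)
      intro w _
      exact MeasurableSpace.measurableSet_generateFrom ⟨m+1, _, rfl⟩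
    rw [MeasurableSpace.pi]
    exact iSup_le fun m => (this m).comap_le

lemma measurableSet_cylSet (n : ℕ) (c : (j : ℕ) → Fin (k (ω' j))) :
    MeasurableSet (cylSet k ω' n c) := by
  have : cylSet k ω' n c = ⋂ j ∈ Finset.range n, (fun v => v j) ⁻¹' {c j} := by
    ext v; simp [cylSet]
  rw [this]
  exact MeasurableSet.biInter (Finset.range n).countable_toSet
    (fun j _ => (measurable_pi_apply j) (measurableSet_singleton (c j)))

include hk in
lemma measure_eq_of_cyl (μ ν : Measure ((j : ℕ) → Fin (k (ω' j))))
    [IsFiniteMeasure μ] [IsFiniteMeasure ν]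
    (h : ∀ n (c : (j : ℕ) → Fin (k (ω' j))), μ (cylSet k ω' n c) = ν (cylSet k ω' n c)) :
    μ = ν := by
  haveI : ∀ n, Nonempty (Fin (k (ω' n))) := fun n => ⟨⟨0, hk _⟩⟩
  refine ext_of_generate_finite (cylFam k ω') (generateFrom_cylFam k hk ω').symm
    (isPiSystem_cylFam k ω') ?_ ?_
  · rintro _ ⟨n, c, rfl⟩; exact h n c
  · have h0 := h 0 (fun j => Classical.arbitrary _)
    simpa [cylSet] using h0

end cyl

section main
variable {I : Type} [Fintype I] [Nonempty I] [MeasurableSpace I] [MeasurableSingletonClass I]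
  (k : I → ℕ) (r : I → ℝ) (t : (i : I) → Fin (k i) → ℝ)
  (p : (i : I) → Fin (k i) → ℝ)
  (η' : (ω : ℕ → I) → Measure ((n : ℕ) → Fin (k (ω n))))

lemma exists_bounds (hr : ∀ i, |r i| < 1) :
    ∃ c T : ℝ, 0 ≤ c ∧ c < 1 ∧ (∀ i, |r i| ≤ c) ∧ 0 ≤ T ∧ ∀ i (j : Fin (k i)), |t i j| ≤ T := by
  obtain ⟨i₀⟩ := (inferInstance : Nonempty I)
  have hne : (Finset.univ : Finset I).Nonempty := ⟨i₀, Finset.mem_univ i₀⟩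
  refine ⟨Finset.univ.sup' hne (fun i => |r i|), ?_⟩
  have hc0 : 0 ≤ Finset.univ.sup' hne (fun i => |r i|) :=
    le_trans (abs_nonneg (r i₀)) (Finset.le_sup' (fun i => |r i|) (Finset.mem_univ i₀))
  have hc1 : Finset.univ.sup' hne (fun i => |r i|) < 1 :=
    (Finset.sup'_lt_iff hne).2 fun i _ => hr i
  have hrc : ∀ i, |r i| ≤ Finset.univ.sup' hne (fun i => |r i|) :=
    fun i => Finset.le_sup' (fun i => |r i|) (Finset.mem_univ i)
  obtain ⟨T, hT⟩ : ∃ T : ℝ, ∀ s : Σ i : I, Fin (k i), |t s.1 s.2| ≤ T :=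
    Finite.exists_le _
  exact ⟨max T 0, hc0, hc1, hrc, le_max_right _ _,
    fun i j => le_trans (hT ⟨i, j⟩) (le_max_left _ _)⟩

lemma term_bound {c T : ℝ} (hc0 : 0 ≤ c) (hrc : ∀ i, |r i| ≤ c)
    (hT : ∀ i (j : Fin (k i)), |t i j| ≤ T)
    (ω : ℕ → I) (u : (n : ℕ) → Fin (k (ω n))) (n : ℕ) :
    |(∏ j ∈ Finset.range n, r (ω j)) * t (ω n) (u n)| ≤ T * c ^ n := by
  rw [abs_mul]
  have h1 : |∏ j ∈ Finset.range n, r (ω j)| ≤ c ^ n := by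
    rw [Finset.abs_prod]
    calc ∏ j ∈ Finset.range n, |r (ω j)| ≤ ∏ _j ∈ Finset.range n, c :=
          Finset.prod_le_prod (fun _ _ => abs_nonneg _) (fun j _ => hrc (ω j))
      _ = c ^ n := by simp
  have h2 : |t (ω n) (u n)| ≤ T := hT _ _
  calc |∏ j ∈ Finset.range n, r (ω j)| * |t (ω n) (u n)|
      ≤ c ^ n * T := mul_le_mul h1 h2 (abs_nonneg _) (pow_nonneg hc0 n)
    _ = T * c ^ n := mul_comm _ _

lemma coding_summable (hr : ∀ i, |r i| < 1) (ω : ℕ → I) (u : (n : ℕ) → Fin (k (ω n))) :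
    Summable (fun n => (∏ j ∈ Finset.range n, r (ω j)) * t (ω n) (u n)) := by
  obtain ⟨c, T, hc0, hc1, hrc, hT0, hT⟩ := exists_bounds k r t hr
  have : Summable (fun n : ℕ => T * c ^ n) :=
    (summable_geometric_of_lt_one hc0 hc1).mul_left T
  exact this.of_norm_bounded (fun n => by
    rw [Real.norm_eq_abs]; exact term_bound k r t hc0 hrc hT ω u n)

lemma coding_rec (hr : ∀ i, |r i| < 1) (ω : ℕ → I) (v : (n : ℕ) → Fin (k (ω n))) :
    coding k r t ω v
      = r (ω 0) * coding k r t (shiftSeq ω) (fun n => v (n + 1)) + t (ω 0) (v 0) := by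
  have hs := coding_summable k r t hr ω v
  rw [coding, hs.tsum_eq_zero_add]
  simp only [Finset.range_zero, Finset.prod_empty, one_mul]
  rw [add_comm]
  congr 1
  have hterm : ∀ n : ℕ, (∏ j ∈ Finset.range (n+1), r (ω j)) * t (ω (n+1)) (v (n+1))
      = r (ω 0) * ((∏ j ∈ Finset.range n, r (shiftSeq ω j))
          * t (shiftSeq ω n) ((fun m => v (m+1)) n)) := by
    intro n
    rw [Finset.prod_range_succ']
    simp [shiftSeq]
    ring
  rw [tsum_congr hterm, tsum_mul_left]
  rfl

lemma coding_measurable (hr : ∀ i, |r i| < 1) (ω : ℕ → I) :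
    Measurable (coding k r t ω) := by
  have hs : ∀ v, HasSum (fun n => (∏ j ∈ Finset.range n, r (ω j)) * t (ω n) (v n))
      (coding k r t ω v) := fun v => (coding_summable k r t hr ω v).hasSum
  apply measurable_of_tendsto_metrizable'
    (f := fun N v => ∑ n ∈ Finset.range N, (∏ j ∈ Finset.range n, r (ω j)) * t (ω n) (v n))
    atTop
  · intro N
    apply Finset.measurable_sum
    intro n _
    exact (measurable_of_countable
      (fun x : Fin (k (ω n)) => (∏ j ∈ Finset.range n, r (ω j)) * t (ω n) x)).comp
      (measurable_pi_apply n)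
  · rw [tendsto_pi_nhds]
    intro v
    exact (hs v).tendsto_sum_nat

lemma key_proj (hk : ∀ i, 0 < k i)
    (hη'prob : ∀ ω, IsProbabilityMeasure (η' ω))
    (hη'cyl : ∀ (ω : ℕ → I) (n : ℕ) (c : (j : ℕ) → Fin (k (ω j))),
      η' ω {u | ∀ j < n, u j = c j} = ∏ j ∈ Finset.range n, ENNReal.ofReal (p (ω j) (c j)))
    (ω : ℕ → I) (j0 : Fin (k (ω 0))) :
    Measure.map (fun (v : (n : ℕ) → Fin (k (ω n))) (n : ℕ) =>
        (v (n+1) : Fin (k (shiftSeq ω n)))) ((η' ω).restrict {v | v 0 = j0})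
      = ENNReal.ofReal (p (ω 0) j0) • η' (shiftSeq ω) := by
  haveI := hη'prob ω
  haveI := hη'prob (shiftSeq ω)
  have hmshift : Measurable (fun (v : (n : ℕ) → Fin (k (ω n))) (n : ℕ) =>
      (v (n+1) : Fin (k (shiftSeq ω n)))) :=
    measurable_pi_lambda _ (fun n => measurable_pi_apply (n+1))
  have hm0 : MeasurableSet {v : (n : ℕ) → Fin (k (ω n)) | v 0 = j0} := by
    have : {v : (n : ℕ) → Fin (k (ω n)) | v 0 = j0} = (fun v => v 0) ⁻¹' {j0} := rfl
    rw [this]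
    exact (measurable_pi_apply 0) (measurableSet_singleton j0)
  haveI : IsFiniteMeasure ((η' ω).restrict {v | v 0 = j0}) := inferInstance
  haveI : IsFiniteMeasure (Measure.map (fun (v : (n : ℕ) → Fin (k (ω n))) (n : ℕ) =>
      (v (n+1) : Fin (k (shiftSeq ω n)))) ((η' ω).restrict {v | v 0 = j0})) :=
    Measure.isFiniteMeasure_map _ _
  haveI : IsFiniteMeasure (ENNReal.ofReal (p (ω 0) j0) • η' (shiftSeq ω)) := by
    constructor
    rw [Measure.smul_apply, smul_eq_mul, measure_univ, mul_one]
    exact ENNReal.ofReal_lt_top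
  refine @measure_eq_of_cyl _ k hk (shiftSeq ω) _ _ (Measure.isFiniteMeasure_map _ _) inferInstance ?_
  intro n c
  refine Eq.trans (Measure.map_apply hmshift (measurableSet_cylSet k (shiftSeq ω) n c)) ?_
  rw [Measure.restrict_apply' hm0]
  have hset : (fun (v : (n : ℕ) → Fin (k (ω n))) (n : ℕ) =>
        (v (n+1) : Fin (k (shiftSeq ω n)))) ⁻¹' cylSet k (shiftSeq ω) n c
        ∩ {v | v 0 = j0}
      = {v : (n : ℕ) → Fin (k (ω n)) | ∀ j < n + 1, v j
          = (fun m => Nat.rec (motive := fun m => Fin (k (ω m))) j0 (fun m _ => c m) m) j} := by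
    ext v
    simp only [Set.mem_inter_iff, Set.mem_preimage, cylSet, Set.mem_setOf_eq]
    constructor
    · rintro ⟨h1, h2⟩ j hj
      cases j with
      | zero => exact h2
      | succ m => exact h1 m (Nat.lt_of_succ_lt_succ hj)
    · intro h
      refine ⟨fun m hm => h (m+1) (Nat.succ_lt_succ hm), h 0 (Nat.succ_pos n)⟩
  rw [hset, hη'cyl ω (n+1), Finset.prod_range_succ', Measure.smul_apply, smul_eq_mul]
  have hc : (η' (shiftSeq ω)) (cylSet k (shiftSeq ω) n c)
      = ∏ j ∈ Finset.range n, ENNReal.ofReal (p (shiftSeq ω j) (c j)) :=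
    hη'cyl (shiftSeq ω) n c
  rw [hc, mul_comm]
  rfl

lemma eta_piece (hk : ∀ i, 0 < k i) (hr : ∀ i, |r i| < 1)
    (hη'prob : ∀ ω, IsProbabilityMeasure (η' ω))
    (hη'cyl : ∀ (ω : ℕ → I) (n : ℕ) (c : (j : ℕ) → Fin (k (ω j))),
      η' ω {u | ∀ j < n, u j = c j} = ∏ j ∈ Finset.range n, ENNReal.ofReal (p (ω j) (c j)))
    (ω : ℕ → I) (j : Fin (k (ω 0))) (A : Set ℝ) (hA : MeasurableSet A) :
    η' ω ((coding k r t ω ⁻¹' A) ∩ {v | v 0 = j})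
      = ENNReal.ofReal (p (ω 0) j) *
          Measure.map (coding k r t (shiftSeq ω)) (η' (shiftSeq ω))
            ((fun x => r (ω 0) * x + t (ω 0) j) ⁻¹' A) := by
  have hm0 : MeasurableSet {v : (n : ℕ) → Fin (k (ω n)) | v 0 = j} := by
    have : {v : (n : ℕ) → Fin (k (ω n)) | v 0 = j} = (fun v => v 0) ⁻¹' {j} := rfl
    rw [this]; exact (measurable_pi_apply 0) (measurableSet_singleton j)
  have hmf : Measurable (fun x : ℝ => r (ω 0) * x + t (ω 0) j) :=
    (measurable_id.const_mul _).add_const _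
  have hB : MeasurableSet ((coding k r t (shiftSeq ω)) ⁻¹'
      ((fun x => r (ω 0) * x + t (ω 0) j) ⁻¹' A)) :=
    (coding_measurable k r t hr (shiftSeq ω)) (hmf hA)
  have hmshift : Measurable (fun (v : (n : ℕ) → Fin (k (ω n))) (n : ℕ) =>
      (v (n+1) : Fin (k (shiftSeq ω n)))) :=
    measurable_pi_lambda _ (fun n => measurable_pi_apply (n+1))
  have hset : (coding k r t ω ⁻¹' A) ∩ {v | v 0 = j}
      = ((fun (v : (n : ℕ) → Fin (k (ω n))) (n : ℕ) => (v (n+1) : Fin (k (shiftSeq ω n)))) ⁻¹'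
          ((coding k r t (shiftSeq ω)) ⁻¹' ((fun x => r (ω 0) * x + t (ω 0) j) ⁻¹' A)))
        ∩ {v | v 0 = j} := by
    ext v
    simp only [Set.mem_inter_iff, Set.mem_preimage, Set.mem_setOf_eq]
    constructor
    · rintro ⟨h1, h2⟩
      refine ⟨?_, h2⟩
      rw [coding_rec k r t hr ω v, h2] at h1
      exact h1
    · rintro ⟨h1, h2⟩
      refine ⟨?_, h2⟩
      rw [coding_rec k r t hr ω v, h2]
      exact h1
  rw [hset]
  have := congrArg (fun μ => μ ((coding k r t (shiftSeq ω)) ⁻¹'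
      ((fun x => r (ω 0) * x + t (ω 0) j) ⁻¹' A)))
    (key_proj k p η' hk hη'prob hη'cyl ω j)
  replace this : (Measure.map (fun (v : (n : ℕ) → Fin (k (ω n))) (n : ℕ) =>
        (v (n+1) : Fin (k (shiftSeq ω n)))) ((η' ω).restrict {v | v 0 = j}))
        ((coding k r t (shiftSeq ω)) ⁻¹' ((fun x => r (ω 0) * x + t (ω 0) j) ⁻¹' A))
      = (ENNReal.ofReal (p (ω 0) j) • η' (shiftSeq ω))
        ((coding k r t (shiftSeq ω)) ⁻¹' ((fun x => r (ω 0) * x + t (ω 0) j) ⁻¹' A)) := this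
  replace this := (Measure.restrict_apply' hm0).symm.trans ((Measure.map_apply hmshift hB).symm.trans this)
  refine this.trans ?_
  rw [Measure.map_apply (coding_measurable k r t hr (shiftSeq ω)) (hmf hA)]
  rfl

lemma eta_decomp (hk : ∀ i, 0 < k i) (hr : ∀ i, |r i| < 1)
    (hη'prob : ∀ ω, IsProbabilityMeasure (η' ω))
    (hη'cyl : ∀ (ω : ℕ → I) (n : ℕ) (c : (j : ℕ) → Fin (k (ω j))),
      η' ω {u | ∀ j < n, u j = c j} = ∏ j ∈ Finset.range n, ENNReal.ofReal (p (ω j) (c j)))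
    (ω : ℕ → I) (A : Set ℝ) (hA : MeasurableSet A) :
    Measure.map (coding k r t ω) (η' ω) A
      = ∑ j : Fin (k (ω 0)), ENNReal.ofReal (p (ω 0) j) *
          Measure.map (coding k r t (shiftSeq ω)) (η' (shiftSeq ω))
            ((fun x => r (ω 0) * x + t (ω 0) j) ⁻¹' A) := by
  rw [Measure.map_apply (coding_measurable k r t hr ω) hA]
  have hpart : coding k r t ω ⁻¹' A
      = ⋃ j : Fin (k (ω 0)), (coding k r t ω ⁻¹' A) ∩ {v | v 0 = j} := by
    ext v; simp
  rw [hpart, measure_iUnion ?_ ?_]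
  · rw [tsum_fintype]
    exact Finset.sum_congr rfl fun j _ =>
      eta_piece k r t p η' hk hr hη'prob hη'cyl ω j A hA
  · intro j1 j2 hne
    simp only [Set.disjoint_left]
    rintro v ⟨_, h1⟩ ⟨_, h2⟩
    exact hne (h1 ▸ h2 ▸ rfl)
  · intro j
    refine MeasurableSet.inter ((coding_measurable k r t hr ω) hA) ?_
    have : {v : (n : ℕ) → Fin (k (ω n)) | v 0 = j} = (fun v => v 0) ⁻¹' {j} := rfl
    rw [this]; exact (measurable_pi_apply 0) (measurableSet_singleton j)

lemma eta_loc (hk : ∀ i, 0 < k i) (hr : ∀ i, |r i| < 1)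
    (hη'prob : ∀ ω, IsProbabilityMeasure (η' ω))
    (hη'cyl : ∀ (ω : ℕ → I) (n : ℕ) (c : (j : ℕ) → Fin (k (ω j))),
      η' ω {u | ∀ j < n, u j = c j} = ∏ j ∈ Finset.range n, ENNReal.ofReal (p (ω j) (c j)))
    (hsep : ∀ ω : ℕ → I, ∀ u v : Fin (k (ω 0)), u ≠ v →
      ∀ x ∈ (fun x => r (ω 0) * x + t (ω 0) u) '' Yset k r t (shiftSeq ω),
      ∀ y ∈ (fun x => r (ω 0) * x + t (ω 0) v) '' Yset k r t (shiftSeq ω),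
        2 < |x - y|)
    (ω : ℕ → I) (u : (n : ℕ) → Fin (k (ω n))) (A : Set ℝ) (hA : MeasurableSet A)
    (hAsub : ∀ z ∈ A, |z - coding k r t ω u| ≤ 2) :
    Measure.map (coding k r t ω) (η' ω) A
      = ENNReal.ofReal (p (ω 0) (u 0)) *
          Measure.map (coding k r t (shiftSeq ω)) (η' (shiftSeq ω))
            ((fun x => r (ω 0) * x + t (ω 0) (u 0)) ⁻¹' A) := by
  rw [eta_decomp k r t p η' hk hr hη'prob hη'cyl ω A hA]
  apply Finset.sum_eq_single_of_mem (u 0) (Finset.mem_univ _)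
  intro j _ hj
  have hempty : coding k r t (shiftSeq ω) ⁻¹' ((fun x => r (ω 0) * x + t (ω 0) j) ⁻¹' A)
      = (∅ : Set ((n : ℕ) → Fin (k (shiftSeq ω n)))) := by
    ext w
    simp only [Set.mem_preimage, Set.mem_empty_iff_false, iff_false]
    intro hw
    have hx : r (ω 0) * coding k r t (shiftSeq ω) w + t (ω 0) j
        ∈ (fun x => r (ω 0) * x + t (ω 0) j) '' Yset k r t (shiftSeq ω) :=
      ⟨coding k r t (shiftSeq ω) w, ⟨w, rfl⟩, rfl⟩
    have hy : coding k r t ω u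
        ∈ (fun x => r (ω 0) * x + t (ω 0) (u 0)) '' Yset k r t (shiftSeq ω) := by
      refine ⟨coding k r t (shiftSeq ω) (fun n => u (n + 1)), ⟨_, rfl⟩, ?_⟩
      exact (coding_rec k r t hr ω u).symm
    have h2 := hsep ω j (u 0) hj _ hx _ hy
    have h3 := hAsub _ hw
    linarith
  have hmf : Measurable (fun x : ℝ => r (ω 0) * x + t (ω 0) j) :=
    (measurable_id.const_mul _).add_const _
  rw [Measure.map_apply (coding_measurable k r t hr (shiftSeq ω)) (hmf hA), hempty,
    measure_empty, mul_zero]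

lemma coding_close (hr : ∀ i, |r i| < 1) (ω : ℕ → I) :
    ∃ n : ℕ, ∀ u w : (n : ℕ) → Fin (k (ω n)), (∀ m < n, w m = u m) →
      |coding k r t ω w - coding k r t ω u| ≤ 1 := by
  obtain ⟨c, T, hc0, hc1, hrc, hT0, hT⟩ := exists_bounds k r t hr
  have hnum : (0:ℝ) < (1 - c) / (2 * T + 1) :=
    div_pos (by linarith) (by linarith)
  obtain ⟨n, hn⟩ := exists_pow_lt_of_lt_one hnum hc1
  refine ⟨n, fun u w hw => ?_⟩
  have hsu := coding_summable k r t hr ω u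
  have hsw := coding_summable k r t hr ω w
  have hdsum : Summable (fun m => ((∏ j ∈ Finset.range m, r (ω j)) * t (ω m) (w m)
      - (∏ j ∈ Finset.range m, r (ω j)) * t (ω m) (u m))) := hsw.sub hsu
  have hdiff : coding k r t ω w - coding k r t ω u
      = ∑' m, ((∏ j ∈ Finset.range m, r (ω j)) * t (ω m) (w m)
          - (∏ j ∈ Finset.range m, r (ω j)) * t (ω m) (u m)) := (Summable.tsum_sub hsw hsu).symm
  have hb : ∀ m, |(∏ j ∈ Finset.range m, r (ω j)) * t (ω m) (w m)
      - (∏ j ∈ Finset.range m, r (ω j)) * t (ω m) (u m)| ≤ 2 * T * c ^ m := by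
    intro m
    have h1 : |∏ j ∈ Finset.range m, r (ω j)| ≤ c ^ m := by
      rw [Finset.abs_prod]
      calc ∏ j ∈ Finset.range m, |r (ω j)| ≤ ∏ _j ∈ Finset.range m, c :=
            Finset.prod_le_prod (fun _ _ => abs_nonneg _) (fun j _ => hrc (ω j))
        _ = c ^ m := by simp
    have h2 : |t (ω m) (w m) - t (ω m) (u m)| ≤ 2 * T := by
      calc |t (ω m) (w m) - t (ω m) (u m)|
          ≤ |t (ω m) (w m)| + |t (ω m) (u m)| := abs_sub _ _
        _ ≤ T + T := add_le_add (hT _ _) (hT _ _)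
        _ = 2 * T := by ring
    calc |(∏ j ∈ Finset.range m, r (ω j)) * t (ω m) (w m)
          - (∏ j ∈ Finset.range m, r (ω j)) * t (ω m) (u m)|
        = |∏ j ∈ Finset.range m, r (ω j)| * |t (ω m) (w m) - t (ω m) (u m)| := by
          rw [← abs_mul, mul_sub]
      _ ≤ c ^ m * (2 * T) := mul_le_mul h1 h2 (abs_nonneg _) (pow_nonneg hc0 _)
      _ = 2 * T * c ^ m := by ring
  have h0 : ∀ m < n, (∏ j ∈ Finset.range m, r (ω j)) * t (ω m) (w m)
      - (∏ j ∈ Finset.range m, r (ω j)) * t (ω m) (u m) = 0 := by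
    intro m hm; rw [hw m hm]; ring
  have habs := tsum_tail_bound hc0 hc1 (by linarith : (0:ℝ) ≤ 2 * T) hdsum h0 hb
  have hfinal : 2 * T * c ^ n * (1 - c)⁻¹ ≤ 1 := by
    have h1c : (0:ℝ) < 1 - c := by linarith
    have hn' : c ^ n * (2 * T + 1) < 1 - c := (lt_div_iff₀ (by linarith)).1 hn
    rw [← div_eq_mul_inv, div_le_one h1c]
    nlinarith [pow_nonneg hc0 n]
  rw [hdiff]
  exact le_trans habs hfinal

lemma eta_pos (hk : ∀ i, 0 < k i) (hr : ∀ i, |r i| < 1) (hp : ∀ i j, 0 < p i j)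
    (hη'prob : ∀ ω, IsProbabilityMeasure (η' ω))
    (hη'cyl : ∀ (ω : ℕ → I) (n : ℕ) (c : (j : ℕ) → Fin (k (ω j))),
      η' ω {u | ∀ j < n, u j = c j} = ∏ j ∈ Finset.range n, ENNReal.ofReal (p (ω j) (c j)))
    (ω : ℕ → I) (u : (n : ℕ) → Fin (k (ω n))) :
    0 < Measure.map (coding k r t ω) (η' ω)
        (Set.Icc (coding k r t ω u - 1) (coding k r t ω u + 1)) := by
  obtain ⟨n, hn⟩ := coding_close k r t hr ω
  rw [Measure.map_apply (coding_measurable k r t hr ω) measurableSet_Icc]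
  have hsub : {v : (m : ℕ) → Fin (k (ω m)) | ∀ j < n, v j = u j}
      ⊆ coding k r t ω ⁻¹' Set.Icc (coding k r t ω u - 1) (coding k r t ω u + 1) := by
    intro w hw
    have := hn u w hw
    simp only [Set.mem_preimage, Set.mem_Icc]
    obtain ⟨h1, h2⟩ := abs_le.1 this
    constructor
    · linarith
    · linarith
  calc (0:ℝ≥0∞) < ∏ j ∈ Finset.range n, ENNReal.ofReal (p (ω j) (u j)) := by
        apply CanonicallyOrderedAdd.prod_pos.2
        intro j _
        exact ENNReal.ofReal_pos.2 (hp _ _)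
    _ = η' ω {v | ∀ j < n, v j = u j} := (hη'cyl ω n u).symm
    _ ≤ η' ω (coding k r t ω ⁻¹' Set.Icc (coding k r t ω u - 1) (coding k r t ω u + 1)) :=
        measure_mono hsub

lemma etaSigned_zero (ω : ℕ → I) (u : (n : ℕ) → Fin (k (ω n))) :
    etaSigned k r t η' ω u 0
      = recenter (Measure.map (coding k r t ω) (η' ω)) (coding k r t ω u) :=
  if_pos rfl

lemma etaSigned_one (ω : ℕ → I) (u : (n : ℕ) → Fin (k (ω n))) :
    etaSigned k r t η' ω u 1
      = Measure.map (fun x : ℝ => -x)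
          (recenter (Measure.map (coding k r t ω) (η' ω)) (coding k r t ω u)) :=
  if_neg (by decide)

end main

end Stmt10Aux

section corelemma
open MeasureTheory Filter Topology ENNReal
set_option linter.unusedSectionVars false
set_option maxHeartbeats 1000000
variable {I : Type} [Fintype I] [Nonempty I] [MeasurableSpace I] [MeasurableSingletonClass I]
  (k : I → ℕ) (r : I → ℝ) (t : (i : I) → Fin (k i) → ℝ)
  (p : (i : I) → Fin (k i) → ℝ)
  (η' : (ω : ℕ → I) → Measure ((n : ℕ) → Fin (k (ω n))))

lemma stmt10_core (hk : ∀ i, 0 < k i) (hr : ∀ i, |r i| < 1) (hr0 : ∀ i, r i ≠ 0)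
    (hp : ∀ i j, 0 < p i j)
    (hη'prob : ∀ ω, IsProbabilityMeasure (η' ω))
    (hη'cyl : ∀ (ω : ℕ → I) (n : ℕ) (c : (j : ℕ) → Fin (k (ω j))),
      η' ω {u | ∀ j < n, u j = c j} = ∏ j ∈ Finset.range n, ENNReal.ofReal (p (ω j) (c j)))
    (hsep : ∀ ω : ℕ → I, ∀ u v : Fin (k (ω 0)), u ≠ v →
      ∀ x ∈ (fun x => r (ω 0) * x + t (ω 0) u) '' Yset k r t (shiftSeq ω),
      ∀ y ∈ (fun x => r (ω 0) * x + t (ω 0) v) '' Yset k r t (shiftSeq ω),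
        2 < |x - y|)
    (ω : ℕ → I) (u : (n : ℕ) → Fin (k (ω n))) :
    scaleM (-Real.log |r (ω 0)|)
        (recenter (Measure.map (coding k r t ω) (η' ω)) (coding k r t ω u))
      = if 0 < r (ω 0) then
          recenter (Measure.map (coding k r t (shiftSeq ω)) (η' (shiftSeq ω)))
            (coding k r t (shiftSeq ω) (fun n => u (n + 1)))
        else Measure.map (fun x : ℝ => -x)
          (recenter (Measure.map (coding k r t (shiftSeq ω)) (η' (shiftSeq ω)))
            (coding k r t (shiftSeq ω) (fun n => u (n + 1)))) := by
  -- notation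
  set ρ := r (ω 0) with hρdef
  have habs : |ρ| < 1 := hr _
  have habs0 : 0 < |ρ| := abs_pos.2 (hr0 _)
  set η : Measure ℝ := Measure.map (coding k r t ω) (η' ω) with hηdef
  set ηs : Measure ℝ := Measure.map (coding k r t (shiftSeq ω)) (η' (shiftSeq ω)) with hηsdef
  set x₀ : ℝ := coding k r t ω u with hx₀def
  set xs : ℝ := coding k r t (shiftSeq ω) (fun n => u (n + 1)) with hxsdef
  have hx₀ : x₀ = ρ * xs + t (ω 0) (u 0) := Stmt10Aux.coding_rec k r t hr ω u
  haveI : IsProbabilityMeasure η := by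
    rw [hηdef]
    exact Measure.isProbabilityMeasure_map (Stmt10Aux.coding_measurable k r t hr ω).aemeasurable
  haveI : IsProbabilityMeasure ηs := by
    rw [hηsdef]
    exact Measure.isProbabilityMeasure_map (Stmt10Aux.coding_measurable k r t hr (shiftSeq ω)).aemeasurable
  have hexpneg : Real.exp (-(-Real.log |ρ|)) = |ρ| := by
    rw [neg_neg, Real.exp_log habs0]
  have hexp : Real.exp (-Real.log |ρ|) = |ρ|⁻¹ := by
    rw [Real.exp_neg, Real.exp_log habs0]
  set q : ℝ≥0∞ := ηs (Set.Icc (xs - 1) (xs + 1)) with hqdef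
  have hq0 : q ≠ 0 := by
    rw [hqdef, hηsdef, hxsdef]
    exact (Stmt10Aux.eta_pos k r t p η' hk hr hp hη'prob hη'cyl (shiftSeq ω) (fun n => u (n+1))).ne'
  have hqtop : q ≠ ⊤ := measure_ne_top _ _
  set p0 : ℝ≥0∞ := ENNReal.ofReal (p (ω 0) (u 0)) with hp0def
  have hp00 : p0 ≠ 0 := (ENNReal.ofReal_pos.2 (hp _ _)).ne'
  have hp0top : p0 ≠ ⊤ := ENNReal.ofReal_ne_top
  set c : ℝ≥0∞ := η (Set.Icc (x₀ - 1) (x₀ + 1)) with hcdef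
  set f : ℝ → ℝ := fun x => ρ * x + t (ω 0) (u 0) with hfdef
  have hfmeas : Measurable f := (measurable_id.const_mul _).add_const _
  -- localization of c
  have hc : c = p0 * ηs (f ⁻¹' Set.Icc (x₀ - 1) (x₀ + 1)) := by
    rw [hcdef, hηdef]
    exact Stmt10Aux.eta_loc k r t p η' hk hr hη'prob hη'cyl hsep ω u _ measurableSet_Icc
      (fun z hz => by rw [Set.mem_Icc] at hz; rw [abs_le]; constructor <;> linarith [hz.1, hz.2])
  have hIsub : Set.Icc (xs - 1) (xs + 1) ⊆ f ⁻¹' Set.Icc (x₀ - 1) (x₀ + 1) := by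
    intro y hy
    rw [Set.mem_Icc] at hy
    have h1 : |y - xs| ≤ 1 := abs_le.2 ⟨by linarith [hy.1], by linarith [hy.2]⟩
    have h2 : |f y - x₀| ≤ |ρ| := by
      have : f y - x₀ = ρ * (y - xs) := by rw [hfdef, hx₀]; ring
      rw [this, abs_mul]
      calc |ρ| * |y - xs| ≤ |ρ| * 1 := by
            exact mul_le_mul_of_nonneg_left h1 (le_of_lt habs0)
        _ = |ρ| := mul_one _
    rw [Set.mem_preimage, Set.mem_Icc]
    obtain ⟨h3, h4⟩ := abs_le.1 h2
    constructor <;> [linarith [habs.le]; linarith [habs.le]]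
  have hc0 : c ≠ 0 := by
    rw [hc]
    apply mul_ne_zero hp00
    exact fun h => hq0 (le_antisymm (h ▸ measure_mono hIsub) zero_le)
  have hctop : c ≠ ⊤ := by rw [hcdef]; exact measure_ne_top _ _
  -- the two key measure computations
  have hmsub : Measurable (fun y : ℝ => y - x₀) := measurable_id.sub_const _
  have hmmul : Measurable (fun y : ℝ => |ρ|⁻¹ * y) := measurable_id.const_mul _
  -- normalizer set identity
  have hpre1 : (fun y : ℝ => y - x₀) ⁻¹' Set.Icc (-|ρ|) |ρ| = Set.Icc (x₀ - |ρ|) (x₀ + |ρ|) := by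
    ext z
    simp only [Set.mem_preimage, Set.mem_Icc]
    constructor <;> rintro ⟨h1, h2⟩ <;> constructor <;> linarith
  have hpre2 : f ⁻¹' Set.Icc (x₀ - |ρ|) (x₀ + |ρ|) = Set.Icc (xs - 1) (xs + 1) := by
    ext y
    simp only [Set.mem_preimage, Set.mem_Icc, hfdef]
    have hfy : ρ * y + t (ω 0) (u 0) - x₀ = ρ * (y - xs) := by rw [hx₀]; ring
    constructor
    · rintro ⟨h1, h2⟩
      have : |ρ * y + t (ω 0) (u 0) - x₀| ≤ |ρ| := abs_le.2 ⟨by linarith, by linarith⟩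
      rw [hfy, abs_mul] at this
      have h5 : |y - xs| ≤ 1 :=
        le_of_mul_le_mul_left (by rw [mul_one]; exact this) habs0
      obtain ⟨h3, h4⟩ := abs_le.1 h5
      constructor <;> linarith
    · rintro ⟨h1, h2⟩
      have h1' : |y - xs| ≤ 1 := abs_le.2 ⟨by linarith, by linarith⟩
      have : |ρ * y + t (ω 0) (u 0) - x₀| ≤ |ρ| := by
        rw [hfy, abs_mul]
        calc |ρ| * |y - xs| ≤ |ρ| * 1 := mul_le_mul_of_nonneg_left h1' (le_of_lt habs0)
          _ = |ρ| := mul_one _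
      obtain ⟨h3, h4⟩ := abs_le.1 this
      constructor <;> linarith
  -- value of the normalizer of scaleM
  have hnorm : (recenter η x₀) (Set.Icc (-|ρ|) |ρ|) = c⁻¹ * (p0 * q) := by
    rw [recenter, Stmt10Aux.smul_app, ← hcdef]
    congr 1
    rw [Measure.restrict_apply measurableSet_Icc,
      Set.inter_eq_left.2 (Set.Icc_subset_Icc (by linarith) (by linarith)),
      Measure.map_apply hmsub measurableSet_Icc, hpre1, hηdef]
    rw [Stmt10Aux.eta_loc k r t p η' hk hr hη'prob hη'cyl hsep ω u _ measurableSet_Icc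
      (fun z hz => by
        rw [Set.mem_Icc] at hz
        rw [abs_le]; constructor <;> [linarith [hz.1, habs.le]; linarith [hz.2, habs.le]])]
    rw [← hfdef, hpre2, ← hηsdef, ← hqdef, ← hp0def]
  have hcinv0 : c⁻¹ ≠ 0 := ENNReal.inv_ne_zero.2 hctop
  have hcinvtop : c⁻¹ ≠ ⊤ := ENNReal.inv_ne_top.2 hc0
  -- main LHS computation
  have hmain : ∀ B : Set ℝ, MeasurableSet B →
      scaleM (-Real.log |ρ|) (recenter η x₀) B
        = q⁻¹ * ηs (f ⁻¹' ((fun y => y - x₀) ⁻¹'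
            ((fun y => |ρ|⁻¹ * y) ⁻¹' (B ∩ Set.Icc (-1 : ℝ) 1)))) := by
    intro B hB
    have hS2meas : MeasurableSet ((fun y => |ρ|⁻¹ * y) ⁻¹' (B ∩ Set.Icc (-1 : ℝ) 1)) :=
      hmmul (hB.inter measurableSet_Icc)
    have hS2sub : (fun y => |ρ|⁻¹ * y) ⁻¹' (B ∩ Set.Icc (-1 : ℝ) 1)
        ⊆ Set.Icc (-|ρ|) |ρ| := by
      intro z hz
      obtain ⟨_, hzI⟩ := hz
      rw [Set.mem_Icc] at hzI ⊢
      obtain ⟨h1, h2⟩ := hzI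
      have hz' : z = |ρ| * (|ρ|⁻¹ * z) := by
        rw [← mul_assoc, mul_inv_cancel₀ (ne_of_gt habs0), one_mul]
      constructor <;> nlinarith [habs0]
    rw [scaleM, Stmt10Aux.smul_app, hexpneg, hnorm]
    simp only [hexp]
    rw [Measure.restrict_apply hB, Measure.map_apply hmmul (hB.inter measurableSet_Icc)]
    have hrec2 : (recenter η x₀) ((fun y => |ρ|⁻¹ * y) ⁻¹' (B ∩ Set.Icc (-1 : ℝ) 1))
        = c⁻¹ * (p0 * ηs (f ⁻¹' ((fun y => y - x₀) ⁻¹'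
            ((fun y => |ρ|⁻¹ * y) ⁻¹' (B ∩ Set.Icc (-1 : ℝ) 1))))) := by
      rw [recenter, Stmt10Aux.smul_app, ← hcdef]
      rw [Measure.restrict_apply hS2meas,
        Set.inter_eq_left.2 (hS2sub.trans (Set.Icc_subset_Icc (by linarith [habs.le]) habs.le)),
        Measure.map_apply hmsub hS2meas, hηdef]
      rw [Stmt10Aux.eta_loc k r t p η' hk hr hη'prob hη'cyl hsep ω u _ (hmsub hS2meas)
        (fun z hz => by
          have hz2 := hS2sub hz
          rw [Set.mem_Icc] at hz2
          have ha : -|ρ| ≤ z - x₀ := hz2.1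
          have hb : z - x₀ ≤ |ρ| := hz2.2
          refine abs_le.2 ⟨?_, ?_⟩ <;> linarith [habs.le, hx₀def])]
    rw [hrec2, Stmt10Aux.enn_cancel _ _ hcinv0 hcinvtop, Stmt10Aux.enn_cancel _ _ hp00 hp0top]
  have hsubxs : Measurable (fun y : ℝ => y - xs) := measurable_id.sub_const xs
  by_cases hρ : 0 < ρ
  · rw [if_pos hρ]
    refine Measure.ext fun B hB => ?_
    rw [hmain B hB, recenter, Stmt10Aux.smul_app, ← hqdef, Measure.restrict_apply hB,
      Measure.map_apply hsubxs (hB.inter measurableSet_Icc)]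
    congr 2
    ext y
    simp only [Set.mem_preimage]
    have hkey : |ρ|⁻¹ * (f y - x₀) = y - xs := by
      have hρne : ρ ≠ 0 := ne_of_gt hρ
      rw [abs_of_pos hρ, hfdef, hx₀]
      have h : ρ * y + t (ω 0) (u 0) - (ρ * xs + t (ω 0) (u 0)) = ρ * (y - xs) := by ring
      rw [h, ← mul_assoc, inv_mul_cancel₀ hρne, one_mul]
    rw [hkey]
  · have hρneg : ρ < 0 := lt_of_le_of_ne (not_lt.1 hρ) (hr0 _)
    rw [if_neg hρ]
    refine Measure.ext fun B hB => ?_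
    rw [hmain B hB, Measure.map_apply measurable_neg hB, recenter, Stmt10Aux.smul_app, ← hqdef,
      Measure.restrict_apply (measurable_neg hB),
      Measure.map_apply hsubxs ((measurable_neg hB).inter measurableSet_Icc)]
    congr 2
    ext y
    simp only [Set.mem_preimage, Set.mem_inter_iff, Set.mem_Icc]
    have hkey : |ρ|⁻¹ * (f y - x₀) = -(y - xs) := by
      have hρne : ρ ≠ 0 := ne_of_lt hρneg
      rw [abs_of_neg hρneg, hfdef, hx₀]
      have h : ρ * y + t (ω 0) (u 0) - (ρ * xs + t (ω 0) (u 0)) = ρ * (y - xs) := by ring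
      rw [h, inv_neg, neg_mul, ← mul_assoc, inv_mul_cancel₀ hρne, one_mul]
    rw [hkey]
    constructor
    · rintro ⟨h1, h2, h3⟩
      exact ⟨by simpa using h1, by constructor <;> linarith⟩
    · rintro ⟨h1, h2, h3⟩
      exact ⟨by simpa using h1, by constructor <;> linarith⟩


end corelemma

/-- in a model (with possibly orientation-reversing maps) with strong
separation in which the pieces `f^{(ω_1)}_u(Y^{(σω)})` are at distance `> 2` from each
other, for every `ω`, `u` and `a ∈ ℤ/2ℤ` one has
`S_{-log |r_{ω_1}|} η_{ω,u,a} = η_{M'(ω,u,a)}`, where `M'(ω,u,a) = (σω, σu, a)` if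
`r_{ω_1} > 0` and `M'(ω,u,a) = (σω, σu, a+1)` if `r_{ω_1} < 0`. -/
theorem stmt10
    (I : Type) [Fintype I] [Nonempty I] [MeasurableSpace I] [MeasurableSingletonClass I]
    (k : I → ℕ) (hk : ∀ i, 0 < k i)
    (r : I → ℝ) (hr : ∀ i, |r i| < 1) (hr0 : ∀ i, r i ≠ 0)
    (t : (i : I) → Fin (k i) → ℝ)
    (p : (i : I) → Fin (k i) → ℝ) (hp : ∀ i j, 0 < p i j) (hpsum : ∀ i, ∑ j, p i j = 1)
    (P : Measure (ℕ → I)) (hP : IsProbabilityMeasure P)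
    (hPinv : Measure.map (shiftSeq (I := I)) P = P)
    (η' : (ω : ℕ → I) → Measure ((n : ℕ) → Fin (k (ω n))))
    (hη'prob : ∀ ω, IsProbabilityMeasure (η' ω))
    (hη'cyl : ∀ (ω : ℕ → I) (n : ℕ) (c : (j : ℕ) → Fin (k (ω j))),
      η' ω {u | ∀ j < n, u j = c j} = ∏ j ∈ Finset.range n, ENNReal.ofReal (p (ω j) (c j)))
    (hSSC : ∀ ω : ℕ → I, ∀ u v : Fin (k (ω 0)), u ≠ v →
      Disjoint ((fun x => r (ω 0) * x + t (ω 0) u) '' Yset k r t (shiftSeq ω))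
               ((fun x => r (ω 0) * x + t (ω 0) v) '' Yset k r t (shiftSeq ω)))
    (hsep : ∀ ω : ℕ → I, ∀ u v : Fin (k (ω 0)), u ≠ v →
      ∀ x ∈ (fun x => r (ω 0) * x + t (ω 0) u) '' Yset k r t (shiftSeq ω),
      ∀ y ∈ (fun x => r (ω 0) * x + t (ω 0) v) '' Yset k r t (shiftSeq ω),
        2 < |x - y|)
    (ω : ℕ → I) (u : (n : ℕ) → Fin (k (ω n))) (a : ZMod 2) :
    scaleM (-Real.log |r (ω 0)|) (etaSigned k r t η' ω u a)
      = etaSigned k r t η' (shiftSeq ω) (fun n => u (n + 1))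
          (if 0 < r (ω 0) then a else a + 1) := by
  have hcore := stmt10_core k r t p η' hk hr hr0 hp hη'prob hη'cyl hsep ω u
  have h01 : ∀ b : ZMod 2, b = 0 ∨ b = 1 := by decide
  have hz01 : (0 : ZMod 2) + 1 = 1 := by decide
  have hz11 : (1 : ZMod 2) + 1 = 0 := by decide
  by_cases hρ : 0 < r (ω 0)
  · rw [if_pos hρ] at hcore ⊢
    rcases h01 a with ha | ha <;> subst ha
    · rw [Stmt10Aux.etaSigned_zero, Stmt10Aux.etaSigned_zero k r t η' (shiftSeq ω) (fun n => u (n + 1))]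
      exact hcore
    · rw [Stmt10Aux.etaSigned_one, Stmt10Aux.etaSigned_one k r t η' (shiftSeq ω) (fun n => u (n + 1)), ← hcore, Stmt10Aux.scaleM_map_neg]
  · rw [if_neg hρ] at hcore ⊢
    rcases h01 a with ha | ha <;> subst ha
    · rw [hz01, Stmt10Aux.etaSigned_zero, Stmt10Aux.etaSigned_one k r t η' (shiftSeq ω) (fun n => u (n + 1))]
      exact hcore
    · rw [hz11, Stmt10Aux.etaSigned_one, Stmt10Aux.etaSigned_zero k r t η' (shiftSeq ω) (fun n => u (n + 1)),
        Stmt10Aux.scaleM_map_neg, hcore, Stmt10Aux.map_neg_neg]
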